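/- Let m be a basic probability assignment on a finite nonempty set Θ with k_Bel < 1. Then the intersection probability is the special focus of the pair of lower and upper simplices, with affine coordinate β[Bel] on each of the lines joining corresponding vertices: for every x ∈ Θ and every y ∈ Θ, p[Bel](y) = (1 − β[Bel])·t¹_x(y) + β[Bel]·t^{n−1}_x(y). -/
import Mathlib


open Finset

/-- A basic probability assignment on a finite set `Θ`. -/
def IsBPA {Θ : Type*} [Fintype Θ] (m : Finset Θ → ℝ) : Prop :=
  m ∅ = 0 ∧ (∀ A, 0 ≤ m A) ∧ (∑ A : Finset Θ, m A) = 1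

/-- Belief function `Bel(A) = ∑_{B ⊆ A} m(B)`. -/
noncomputable def Bel {Θ : Type*} [Fintype Θ] [DecidableEq Θ] (m : Finset Θ → ℝ)
    (A : Finset Θ) : ℝ :=
  ∑ B ∈ A.powerset, m B

/-- Plausibility function `Pl(A) = ∑_{B ∩ A ≠ ∅} m(B)`. -/
noncomputable def Pl {Θ : Type*} [Fintype Θ] [DecidableEq Θ] (m : Finset Θ → ℝ)
    (A : Finset Θ) : ℝ :=
  ∑ B ∈ Finset.univ.filter (fun B => B ∩ A ≠ ∅), m B

/-- Total mass of singletons `k_Bel`. -/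
noncomputable def kBel {Θ : Type*} [Fintype Θ] (m : Finset Θ → ℝ) : ℝ :=
  ∑ x : Θ, m {x}

/-- Total plausibility of singletons `k_Pl`. -/
noncomputable def kPl {Θ : Type*} [Fintype Θ] [DecidableEq Θ] (m : Finset Θ → ℝ) : ℝ :=
  ∑ x : Θ, Pl m {x}

/-- `β[Bel] = (1 - k_Bel)/(k_Pl - k_Bel)`. -/
noncomputable def betaBel {Θ : Type*} [Fintype Θ] [DecidableEq Θ] (m : Finset Θ → ℝ) : ℝ :=
  (1 - kBel m) / (kPl m - kBel m)

/-- The intersection probability `p[Bel](x) = m(x) + β[Bel]⬝(Pl(x) - m(x))`. -/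
noncomputable def pInt {Θ : Type*} [Fintype Θ] [DecidableEq Θ] (m : Finset Θ → ℝ)
    (x : Θ) : ℝ :=
  m {x} + betaBel m * (Pl m {x} - m {x})

/-- Vertex `t¹_x` of the lower simplex. -/
noncomputable def lowerVertex {Θ : Type*} [Fintype Θ] [DecidableEq Θ]
    (m : Finset Θ → ℝ) (x : Θ) : Θ → ℝ :=
  fun y => if y = x then m {y} + 1 - kBel m else m {y}

/-- Vertex `t^{n-1}_x` of the upper simplex. -/
noncomputable def upperVertex {Θ : Type*} [Fintype Θ] [DecidableEq Θ]
    (m : Finset Θ → ℝ) (x : Θ) : Θ → ℝ :=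
  fun y => if y = x then Pl m {y} + 1 - kPl m else Pl m {y}


lemma kPl_eq {Θ : Type*} [Fintype Θ] [DecidableEq Θ] (m : Finset Θ → ℝ) :
    kPl m = ∑ B : Finset Θ, (B.card : ℝ) * m B := by
  unfold kPl Pl
  have h : ∀ x : Θ, ∑ B ∈ Finset.univ.filter (fun B => B ∩ ({x} : Finset Θ) ≠ ∅), m B
      = ∑ B : Finset Θ, if x ∈ B then m B else 0 := by
    intro x
    rw [Finset.sum_filter]
    refine Finset.sum_congr rfl fun B _ => ?_
    congr 1
    simp [Finset.inter_singleton_of_mem, Finset.eq_empty_iff_forall_notMem]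
  simp_rw [h]
  rw [Finset.sum_comm]
  refine Finset.sum_congr rfl fun B _ => ?_
  rw [Finset.sum_ite_mem, Finset.univ_inter, Finset.sum_const, nsmul_eq_mul]

lemma denom_pos {Θ : Type*} [Fintype Θ] [DecidableEq Θ]
    (m : Finset Θ → ℝ) (hm : IsBPA m) (h1 : kBel m < 1) :
    0 < kPl m - kBel m := by
  obtain ⟨h0, hpos, hsum⟩ := hm
  have hkPl : 1 ≤ kPl m := by
    rw [kPl_eq, ← hsum]
    refine Finset.sum_le_sum fun B _ => ?_
    rcases eq_or_ne B ∅ with rfl | hB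
    · simp [h0]
    · have : (1 : ℝ) ≤ (B.card : ℝ) := by
        exact_mod_cast Finset.Nonempty.card_pos (Finset.nonempty_iff_ne_empty.2 hB)
      nlinarith [hpos B]
  linarith

/-- Theorem 5: the intersection probability is the special focus of the
pair of lower and upper simplices, with affine coordinate `β[Bel]` on each line joining
corresponding vertices: `p[Bel] = (1 - β[Bel])⬝t¹_x + β[Bel]⬝t^{n-1}_x` for all `x`. -/
theorem pInt_special_focus_of_lower_upper_simplices
    {Θ : Type*} [Fintype Θ] [DecidableEq Θ] [Nonempty Θ]
    (m : Finset Θ → ℝ) (hm : IsBPA m) (h1 : kBel m < 1) :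
    ∀ x y : Θ,
      pInt m y = (1 - betaBel m) * lowerVertex m x y + betaBel m * upperVertex m x y := by
  intro x y
  have hd : kPl m - kBel m ≠ 0 := ne_of_gt (denom_pos m hm h1)
  have hb : betaBel m * (kPl m - kBel m) = 1 - kBel m := by
    unfold betaBel; field_simp
  unfold pInt lowerVertex upperVertex
  by_cases hxy : y = x
  · simp only [hxy, if_pos rfl, if_true, eq_self_iff_true]
    nlinarith [hb]
  · simp only [if_neg hxy]
    ring
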